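/- Let A be a random variable on a finite set of size n with H(A | S = s) ≥ log n − γ − ε for a fixed conditioning event, let X be the indicator of the event A ∉ M for a subset M of size βn (β < 1), and let p = Pr(A ∉ M | S = s). If p ≥ 1 − log(1+β) − γ − ε > 0, then H(A | S = s, A ∉ M) ≥ log((1−β)n) − (γ+ε)/(1 − log(1+β) − γ − ε). -/

import Mathlib

open Finset

/-- Shannon entropy (base 2) of a distribution on a finite type. -/
noncomputable def ent {α : Type*} [Fintype α] (p : α → ℝ) : ℝ :=
  -∑ i, p i * Real.logb 2 (p i)

lemma key_ineq (a b : ℝ) (ha : 0 ≤ a) (hb : 0 < b) :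
    a * Real.logb 2 b - a * Real.logb 2 a ≤ (b - a) / Real.log 2 := by
  have hl2 : (0:ℝ) < Real.log 2 := Real.log_pos (by norm_num)
  rcases eq_or_lt_of_le ha with h | h
  · simp [← h]
    positivity
  · have hdiv : Real.logb 2 b - Real.logb 2 a = Real.log (b / a) / Real.log 2 := by
      rw [Real.log_div hb.ne' h.ne', Real.logb, Real.logb]
      ring
    have hlog : Real.log (b / a) ≤ b / a - 1 :=
      Real.log_le_sub_one_of_pos (by positivity)
    have h1 : a * Real.logb 2 b - a * Real.logb 2 a
        = a * (Real.log (b / a) / Real.log 2) := by rw [← hdiv]; ring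
    rw [h1]
    have h2 : a * (Real.log (b / a) / Real.log 2) ≤ a * ((b / a - 1) / Real.log 2) := by
      apply mul_le_mul_of_nonneg_left _ ha
      gcongr
    have h3 : a * ((b / a - 1) / Real.log 2) = (b - a) / Real.log 2 := by
      field_simp
    linarith

lemma sum_neg_log_le {α : Type*} (T : Finset α) (p : α → ℝ)
    (h0 : ∀ i ∈ T, 0 ≤ p i) :
    -∑ i ∈ T, p i * Real.logb 2 (p i) ≤
      (∑ i ∈ T, p i) * Real.logb 2 T.card - (∑ i ∈ T, p i) * Real.logb 2 (∑ i ∈ T, p i) := by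
  set m := ∑ i ∈ T, p i with hm
  have hm0 : 0 ≤ m := Finset.sum_nonneg h0
  rcases eq_or_lt_of_le hm0 with h | hmpos
  · have hz : ∀ i ∈ T, p i = 0 :=
      (Finset.sum_eq_zero_iff_of_nonneg h0).1 h.symm
    have : ∑ i ∈ T, p i * Real.logb 2 (p i) = 0 :=
      Finset.sum_eq_zero fun i hi => by rw [hz i hi]; ring
    rw [this, ← h]
    simp
  · have hT : T.Nonempty := by
      by_contra hne
      rw [Finset.not_nonempty_iff_eq_empty] at hne
      rw [hm, hne, Finset.sum_empty] at hmpos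
      exact lt_irrefl 0 hmpos
    have hcard : (0:ℝ) < T.card := by exact_mod_cast Finset.card_pos.2 hT
    set c := m / T.card with hc
    have hcpos : 0 < c := by positivity
    have hl2 : (0:ℝ) < Real.log 2 := Real.log_pos (by norm_num)
    have hsum : ∑ i ∈ T, (p i * Real.logb 2 c - p i * Real.logb 2 (p i))
        ≤ ∑ i ∈ T, (c - p i) / Real.log 2 :=
      Finset.sum_le_sum fun i hi => key_ineq (p i) c (h0 i hi) hcpos
    have hrhs : ∑ i ∈ T, (c - p i) / Real.log 2 = 0 := by
      rw [← Finset.sum_div, Finset.sum_sub_distrib, Finset.sum_const, ← hm, hc]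
      field_simp
      rw [nsmul_eq_mul, mul_zero, sub_eq_zero]
      field_simp [hcard.ne']
    have hlhs : ∑ i ∈ T, (p i * Real.logb 2 c - p i * Real.logb 2 (p i))
        = m * Real.logb 2 c - ∑ i ∈ T, p i * Real.logb 2 (p i) := by
      rw [Finset.sum_sub_distrib, ← Finset.sum_mul, ← hm]
    have hlogc : Real.logb 2 c = Real.logb 2 m - Real.logb 2 T.card := by
      rw [hc, Real.logb_div hmpos.ne' hcard.ne']
    rw [hlhs, hrhs, hlogc] at hsum
    nlinarith [hsum]

theorem entropy_after_rejection {α : Type*} [Fintype α] [DecidableEq α] (p : α → ℝ)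
    (hp0 : ∀ i, 0 ≤ p i) (hp1 : ∑ i, p i = 1)
    (β γ ε : ℝ) (hβ0 : 0 < β) (hβ1 : β < 1) (hγ : 0 ≤ γ) (hε : 0 < ε)
    (hent : Real.logb 2 (Fintype.card α) - γ - ε ≤ ent p)
    (M : Finset α) (hM : (M.card : ℝ) = β * Fintype.card α)
    (hpos : 0 < 1 - Real.logb 2 (1 + β) - γ - ε)
    (hP : 1 - Real.logb 2 (1 + β) - γ - ε ≤ ∑ i ∈ Mᶜ, p i) :
    Real.logb 2 ((1 - β) * Fintype.card α)
        - (γ + ε) / (1 - Real.logb 2 (1 + β) - γ - ε)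
      ≤ -∑ i ∈ Mᶜ, (p i / ∑ j ∈ Mᶜ, p j) * Real.logb 2 (p i / ∑ j ∈ Mᶜ, p j) := by
  have hne : Nonempty α := by
    by_contra h
    rw [not_nonempty_iff] at h
    simp [Finset.sum_eq_zero_iff] at hp1
  have hn : (0:ℝ) < Fintype.card α := by exact_mod_cast Fintype.card_pos
  set n : ℝ := (Fintype.card α : ℝ) with hn'
  set q : ℝ := ∑ i ∈ Mᶜ, p i with hq
  set m : ℝ := ∑ i ∈ M, p i with hm
  have hqpos : 0 < q := lt_of_lt_of_le hpos hP
  have hm0 : 0 ≤ m := Finset.sum_nonneg fun i _ => hp0 i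
  have hmq : m + q = 1 := by
    rw [hm, hq, Finset.sum_add_sum_compl]
    exact hp1
  set H1 : ℝ := -∑ i ∈ Mᶜ, (p i / q) * Real.logb 2 (p i / q) with hH1
  -- entropy splits over M and Mᶜ
  have hsplit : ent p = (-∑ i ∈ M, p i * Real.logb 2 (p i))
      + (-∑ i ∈ Mᶜ, p i * Real.logb 2 (p i)) := by
    rw [ent, ← Finset.sum_add_sum_compl M fun i => p i * Real.logb 2 (p i)]
    ring
  -- max-entropy bound on M part
  have hMbound := sum_neg_log_le M p fun i _ => hp0 i
  rw [← hm] at hMbound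
  -- identity on Mᶜ part
  have hid : -∑ i ∈ Mᶜ, p i * Real.logb 2 (p i) = q * H1 - q * Real.logb 2 q := by
    have heach : ∀ i ∈ Mᶜ, (p i / q) * Real.logb 2 (p i / q)
        = (p i * Real.logb 2 (p i)) / q - (p i / q) * Real.logb 2 q := by
      intro i _
      rcases eq_or_lt_of_le (hp0 i) with h | h
      · simp [← h]
      · rw [Real.logb_div h.ne' hqpos.ne']
        ring
    rw [hH1, Finset.sum_congr rfl heach, Finset.sum_sub_distrib, ← Finset.sum_div]
    have h2 : ∑ x ∈ Mᶜ, p x / q * Real.logb 2 q = Real.logb 2 q := by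
      rw [← Finset.sum_mul, ← Finset.sum_div, ← hq, div_self hqpos.ne', one_mul]
    rw [h2]
    field_simp
    ring
  -- Gibbs inequality
  have hGibbs : m * Real.logb 2 β + q * Real.logb 2 (1 - β)
      ≤ m * Real.logb 2 m + q * Real.logb 2 q := by
    have h1 := key_ineq m β hm0 hβ0
    have h2 := key_ineq q (1 - β) hqpos.le (by linarith)
    have hl2 : (0:ℝ) < Real.log 2 := Real.log_pos (by norm_num)
    have hz : (β - m) / Real.log 2 + ((1 - β) - q) / Real.log 2 = 0 := by
      rw [← add_div]
      rw [show β - m + (1 - β - q) = 1 - (m + q) by ring, hmq]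
      simp
    linarith
  -- log of M.card
  have hcardM : Real.logb 2 (M.card : ℝ) = Real.logb 2 β + Real.logb 2 n := by
    rw [hM, Real.logb_mul hβ0.ne' hn.ne']
  -- combine
  have hchain : Real.logb 2 n - γ - ε ≤ m * Real.logb 2 n + q * H1 - q * Real.logb 2 (1 - β) := by
    have := hent
    rw [hsplit, hid] at this
    rw [hcardM] at hMbound
    linarith
  have hL : Real.logb 2 ((1 - β) * n) = Real.logb 2 (1 - β) + Real.logb 2 n := by
    rw [Real.logb_mul (by linarith) hn.ne']
  have hkey : q * (Real.logb 2 ((1 - β) * n) - H1) ≤ γ + ε := by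
    rw [hL]
    have hmn : m * Real.logb 2 n = Real.logb 2 n - q * Real.logb 2 n := by
      rw [show m = 1 - q by linarith]
      ring
    linarith
  have hdivq : Real.logb 2 ((1 - β) * n) - H1 ≤ (γ + ε) / q :=
    (le_div_iff₀ hqpos).2 (by linarith [hkey])
  have hdiv2 : (γ + ε) / q ≤ (γ + ε) / (1 - Real.logb 2 (1 + β) - γ - ε) := by
    apply div_le_div_of_nonneg_left (by linarith) hpos hP
  linarith
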